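/- Let r ≥ 1, s = (s_1, …, s_r) ∈ ℕ^r, j = (j_1, …, j_r) ∈ J_s, and m ≥ r − 1. Then BC_{q^m − 1}^{s,j} = Π(q^m − 1) · (u_{1 j_1}^{q^m} / L_m^{s_1}) · Σ ∏_{l=2}^{r} (u_{l j_l}^{q^{i_l}} / L_{i_l}^{s_l}), where the sum runs over all integer tuples m > i_2 > ⋯ > i_r ≥ 0; equivalently BC_{q^m − 1}^{s,j} = BC_{q^m − 1}^{(s_1),(j_1)} · Σ_{m > i_2 > ⋯ > i_r ≥ 0} ∏_{l=2}^{r} u_{l j_l}^{q^{i_l}} / L_{i_l}^{s_l}. -/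

import Mathlib

open Polynomial PowerSeries

noncomputable section

namespace Carlitz

variable (F : Type) [Field F] [Fintype F]

/-- `q`, the cardinality of the finite field of constants `𝔽_q`. -/
def q : ℕ := Fintype.card F

/-- The Carlitz polynomial `D_i = ∏_{j=0}^{i-1} (θ^{q^i} - θ^{q^j})` (with `D_0 = 1`). -/
def Dpoly (i : ℕ) : Polynomial F :=
  ∏ j ∈ Finset.range i, (Polynomial.X ^ (q F) ^ i - Polynomial.X ^ (q F) ^ j)

/-- The Carlitz polynomial `L_i = ∏_{j=1}^{i} (θ - θ^{q^j})` (with `L_0 = 1`). -/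
def Lpoly (i : ℕ) : Polynomial F :=
  ∏ j ∈ Finset.range i, (Polynomial.X - Polynomial.X ^ (q F) ^ (j + 1))

/-- The Carlitz factorial `Π(n) = ∏_i D_i^{n_i}` where `n = Σ_i n_i q^i` is the base-`q`
expansion of `n`.  This also equals the Carlitz gamma `Γ_{n+1}`. -/
def cfact (n : ℕ) : Polynomial F :=
  ∏ i ∈ Finset.range (Nat.digits (q F) n).length,
    (Dpoly F i) ^ ((Nat.digits (q F) n).getD i 0)

/-- The inclusion `A = 𝔽_q[θ] → k = 𝔽_q(θ)`. -/
def toK : Polynomial F →+* RatFunc F := algebraMap _ _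

/-- The Carlitz exponential `e_C(z) = Σ_{i≥0} z^{q^i}/D_i` as a power series over `k`. -/
def eC : PowerSeries (RatFunc F) :=
  PowerSeries.mk fun n => ∑ i ∈ Finset.range (n + 1),
    if (q F) ^ i = n then (toK F (Dpoly F i))⁻¹ else 0

/-- The Bernoulli-Carlitz numbers `BC_n`, defined by `Σ_n BC_n z^n/Π(n) = z/e_C(z)`:
since `e_C(z) = z · u(z)` where `u(z) = Σ_m (coeff_{m+1} e_C) z^m` has constant term `1`,
we have `z/e_C(z) = u(z)⁻¹` and `BC_n = Π(n) · coeff_n (u⁻¹)`. -/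
def BCnum (n : ℕ) : RatFunc F :=
  toK F (cfact F n) *
    PowerSeries.coeff (R := RatFunc F) n
      (PowerSeries.mk fun m => PowerSeries.coeff (R := RatFunc F) (m + 1) (eC F))⁻¹

/-- The Stirling-Carlitz numbers of the second kind `{n brace m}_C`, defined by
`Σ_n {n brace m}_C z^n/Π(n) = e_C(z)^m/Π(m)`, i.e. `{n brace m}_C = Π(n)·coeff_n(e_C^m)/Π(m)`. -/
def StC (n m : ℕ) : RatFunc F :=
  toK F (cfact F n) * PowerSeries.coeff (R := RatFunc F) n (eC F ^ m) * (toK F (cfact F m))⁻¹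

/-- The (finite) set of strictly decreasing tuples `i : Fin r → ℕ`,
`i_1 > i_2 > ⋯ > i_r ≥ 0`, with all values `< N`. -/
def decTuples (r N : ℕ) : Finset (Fin r → ℕ) :=
  (Finset.univ.filter fun i : Fin r → Fin N => ∀ a b : Fin r, a < b → i b < i a).image
    fun i l => (i l : ℕ)

/-- The leading (largest) entry `i_1` of a (strictly decreasing) tuple. -/
def lead {r : ℕ} (i : Fin r → ℕ) : ℕ := if h : 0 < r then i ⟨0, h⟩ else 0

/-- The multi-poly-Bernoulli-Carlitz numbers `BC_n^{s,j}`, defined by the generating series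
`Σ_n BC_n^{s,j} z^n/Π(n) = Li_s(e_C(z)·u_{1 j_1}, u_{2 j_2}, …, u_{r j_r})/e_C(z)
 = Σ_{i_1 > ⋯ > i_r ≥ 0} e_C(z)^{q^{i_1}-1} ∏_l u_{l j_l}^{q^{i_l}}/L_{i_l}^{s_l}`,
written out coefficientwise (here `u l` is the datum `u_{l j_l} ∈ A`; the coefficient of
`z^n` in `e_C^{q^{i_1}-1}` vanishes whenever `i_1 > n`, so the sum below is complete). -/
def MPBC {r : ℕ} (s : Fin r → ℕ) (u : Fin r → Polynomial F) (n : ℕ) : RatFunc F :=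
  toK F (cfact F n) * ∑ i ∈ decTuples r (n + 1),
    PowerSeries.coeff (R := RatFunc F) n (eC F ^ ((q F) ^ lead i - 1)) *
      ∏ l, (toK F (u l)) ^ ((q F) ^ (i l)) * ((toK F (Lpoly F (i l))) ^ (s l))⁻¹

/-- The two-variable rational function field `K₂ = 𝔽_q(θ)(t)`. -/
abbrev K2 := RatFunc (RatFunc F)

/-- The inclusion `k = 𝔽_q(θ) → 𝔽_q(θ)(t)`. -/
def liftK : RatFunc F →+* K2 F :=
  (algebraMap (Polynomial (RatFunc F)) (K2 F)).comp Polynomial.C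

/-- The inclusion `A = 𝔽_q[θ] → 𝔽_q(θ)(t)`. -/
def liftA : Polynomial F →+* K2 F := (liftK F).comp (toK F)

/-- The inclusion of constants `𝔽_q → 𝔽_q(θ)(t)`. -/
def liftF : F →+* K2 F := (liftA F).comp Polynomial.C

/-- Substitution `θ ↦ t` on a polynomial `P ∈ 𝔽_q[θ]`, landing in `𝔽_q(θ)(t)`
(where `t` is the outer variable `RatFunc.X`); e.g. `D_i|_{θ=t}`. -/
def subT (P : Polynomial F) : K2 F :=
  Polynomial.eval (RatFunc.X : K2 F) (P.map (liftF F))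

/-- Evaluation of a polynomial in `A[t]` in `𝔽_q(θ)(t)` (coefficients included via
`A → 𝔽_q(θ)`, the variable `t` sent to the outer `RatFunc.X`). -/
def evalAT (h : Polynomial (Polynomial F)) : K2 F :=
  Polynomial.eval (RatFunc.X : K2 F) (h.map (liftA F))

/-- The power series `1 - Σ_{i≥0} (∏_{j=1}^{i}(t^{q^i} - θ^{q^j})/D_i|_{θ=t}) x^{q^i}`
appearing in the definition of the Anderson-Thakur polynomials. -/
def ATgen : PowerSeries (K2 F) :=
  1 - PowerSeries.mk fun m => ∑ i ∈ Finset.range (m + 1),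
    if (q F) ^ i = m then
      (∏ j ∈ Finset.range i,
        ((RatFunc.X : K2 F) ^ (q F) ^ i - (liftK F RatFunc.X) ^ (q F) ^ (j + 1))) *
        (subT F (Dpoly F i))⁻¹
    else 0

/-- `H : ℕ → A[t]` is the family of Anderson-Thakur polynomials iff
`{1 - Σ_i (∏_{j=1}^{i}(t^{q^i} - θ^{q^j})/D_i|_{θ=t}) x^{q^i}}⁻¹ = Σ_n (H_n/Γ_{n+1}|_{θ=t}) x^n`,
i.e. the product of the left-hand factor with the right-hand series equals `1`. -/
def IsATFamily (H : ℕ → Polynomial (Polynomial F)) : Prop :=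
  ATgen F * (PowerSeries.mk fun n => evalAT F (H n) * (subT F (cfact F n))⁻¹) = 1

/-- Reduction of a rational function `x ∈ k` whose denominator is coprime to `℘`
into `A/℘A`: reduce numerator and denominator (in lowest terms) and divide. -/
def redmod (℘ : Polynomial F) (x : RatFunc F) : Polynomial F ⧸ Ideal.span {℘} :=
  Ideal.Quotient.mk (Ideal.span {℘}) x.num *
    Ring.inverse (Ideal.Quotient.mk (Ideal.span {℘}) x.denom)

/-- The finite multiple zeta value `ζ_{𝒜_k}(s)_℘ ∈ A/℘A`: the sum of
`1/(a_1^{s_1} ⋯ a_r^{s_r})` over monic `a_1, …, a_r ∈ A` with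
`deg ℘ > deg a_1 > ⋯ > deg a_r ≥ 0`. -/
def finMZV (℘ : Polynomial F) {r : ℕ} (s : Fin r → ℕ) : Polynomial F ⧸ Ideal.span {℘} :=
  ∑ᶠ a ∈ {a : Fin r → Polynomial F |
      (∀ l, (a l).Monic) ∧ (StrictAnti fun l => (a l).natDegree) ∧
        ∀ l, (a l).natDegree < ℘.natDegree},
    ∏ l, Ring.inverse (Ideal.Quotient.mk (Ideal.span {℘}) (a l) ^ (s l))

/-- The finite Carlitz multiple polylogarithm
`Li_{𝒜_k,s}(u_1, …, u_r)_℘ = Σ_{deg ℘ > i_1 > ⋯ > i_r ≥ 0} u_1^{q^{i_1}} ⋯ u_r^{q^{i_r}}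
/ (L_{i_1}^{s_1} ⋯ L_{i_r}^{s_r}) ∈ A/℘A`. -/
def finCMPL (℘ : Polynomial F) {r : ℕ} (s : Fin r → ℕ) (u : Fin r → Polynomial F) :
    Polynomial F ⧸ Ideal.span {℘} :=
  ∑ i ∈ decTuples r ℘.natDegree,
    ∏ l, Ideal.Quotient.mk (Ideal.span {℘}) (u l) ^ ((q F) ^ (i l)) *
      Ring.inverse (Ideal.Quotient.mk (Ideal.span {℘}) (Lpoly F (i l)) ^ (s l))

/-! ### Auxiliary lemmas -/

section Aux

private lemma two_le_q : 2 ≤ q F := Fintype.one_lt_card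

private lemma coeff_eC_qpow (j : ℕ) :
    PowerSeries.coeff (R := RatFunc F) ((q F) ^ j) (eC F) = (toK F (Dpoly F j))⁻¹ := by
  rw [eC, PowerSeries.coeff_mk]
  rw [Finset.sum_eq_single j]
  · rw [if_pos rfl]
  · intro i _ hij
    exact if_neg fun h => hij (Nat.pow_right_injective (two_le_q F) h)
  · intro h
    exact absurd (Finset.mem_range.2 (Nat.lt_succ_of_lt (Nat.lt_pow_self (n := j) (two_le_q F)))) h

private lemma coeff_eC_of_ne {n : ℕ} (h : ∀ j, (q F) ^ j ≠ n) :
    PowerSeries.coeff (R := RatFunc F) n (eC F) = 0 := by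
  rw [eC, PowerSeries.coeff_mk]
  exact Finset.sum_eq_zero fun i _ => if_neg (h i)

private lemma coeff_eC_one : PowerSeries.coeff (R := RatFunc F) 1 (eC F) = 1 := by
  have h := coeff_eC_qpow F 0
  rw [pow_zero] at h
  rw [h, Dpoly, Finset.range_zero, Finset.prod_empty, map_one, inv_one]

private lemma coeff_eC_zero : PowerSeries.coeff (R := RatFunc F) 0 (eC F) = 0 :=
  coeff_eC_of_ne F fun j => (pow_pos (by have := two_le_q F; omega) j).ne'

private lemma charK : ∃ p e : ℕ, p.Prime ∧ q F = p ^ e ∧ CharP (RatFunc F) p := by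
  haveI : CharP F (ringChar F) := ringChar.charP F
  obtain ⟨n, hp, hcard⟩ := FiniteField.card F (ringChar F)
  refine ⟨ringChar F, (n : ℕ), hp, hcard, ?_⟩
  exact charP_of_injective_ringHom
    (f := ((algebraMap (Polynomial F) (RatFunc F)).comp Polynomial.C))
    ((RatFunc.algebraMap_injective F).comp (Polynomial.C_injective)) _

private lemma coeff_pow_congr {K : Type} [CommRing K] (f g : PowerSeries K) (n : ℕ)
    (h : ∀ i ≤ n, PowerSeries.coeff (R := K) i f = PowerSeries.coeff (R := K) i g) (k : ℕ) :
    ∀ b ≤ n, PowerSeries.coeff (R := K) b (f ^ k) = PowerSeries.coeff (R := K) b (g ^ k) := by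
  induction k with
  | zero => intro b _; rw [pow_zero, pow_zero]
  | succ k ih =>
    intro b hb
    rw [pow_succ, pow_succ, PowerSeries.coeff_mul, PowerSeries.coeff_mul]
    refine Finset.sum_congr rfl fun x hx => ?_
    rw [Finset.HasAntidiagonal.mem_antidiagonal] at hx
    rw [ih x.1 (by omega), h x.2 (by omega)]

private lemma coeff_pow_prime {K : Type} [Field K] (p : ℕ) [Fact p.Prime] [CharP K p]
    (f : PowerSeries K) (n : ℕ) :
    PowerSeries.coeff (R := K) n (f ^ p) =
      if p ∣ n then (PowerSeries.coeff (R := K) (n / p) f) ^ p else 0 := by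
  have hp : 0 < p := (Fact.out : p.Prime).pos
  set P : Polynomial K := PowerSeries.trunc (n + 1) f with hP
  have hco : ∀ i ≤ n, PowerSeries.coeff (R := K) i ((P : PowerSeries K)) = PowerSeries.coeff (R := K) i f := by
    intro i hi
    rw [hP, PowerSeries.coeff_coe_trunc_of_lt (by omega)]
  have h1 : PowerSeries.coeff (R := K) n (f ^ p) = PowerSeries.coeff (R := K) n ((P : PowerSeries K) ^ p) :=
    coeff_pow_congr f (P : PowerSeries K) n (fun i hi => (hco i hi).symm) p n le_rfl
  rw [h1, ← Polynomial.coe_pow, Polynomial.coeff_coe]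
  have h2 : P ^ p = Polynomial.map (frobenius K p) (Polynomial.expand K p P) :=
    (Polynomial.map_frobenius_expand p P).symm
  rw [h2, Polynomial.coeff_map, Polynomial.coeff_expand hp, apply_ite (frobenius K p),
    map_zero, frobenius_def]
  split_ifs with h
  · rw [← Polynomial.coeff_coe, hco _ (Nat.div_le_self n p)]
  · rfl

private lemma coeff_pow_ppow {K : Type} [Field K] (p : ℕ) [Fact p.Prime] [CharP K p]
    (f : PowerSeries K) (e : ℕ) : ∀ n : ℕ,
    PowerSeries.coeff (R := K) n (f ^ p ^ e) =
      if p ^ e ∣ n then (PowerSeries.coeff (R := K) (n / p ^ e) f) ^ p ^ e else 0 := by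
  have hp : 0 < p := (Fact.out : p.Prime).pos
  induction e with
  | zero => intro n; simp
  | succ e ih =>
    intro n
    rw [show f ^ p ^ (e + 1) = (f ^ p ^ e) ^ p from by rw [pow_succ, pow_mul],
      coeff_pow_prime p _ n]
    by_cases h1 : p ∣ n
    · rw [if_pos h1, ih (n / p)]
      by_cases h2 : p ^ e ∣ n / p
      · have hd : p ^ (e + 1) ∣ n := by
          have := (Nat.dvd_div_iff_mul_dvd h1).1 h2
          rwa [← pow_succ'] at this
        rw [if_pos h2, if_pos hd, ← pow_mul, ← pow_succ,
          Nat.div_div_eq_div_mul, ← pow_succ']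
      · have hd : ¬ p ^ (e + 1) ∣ n := by
          intro hc
          exact h2 ((Nat.dvd_div_iff_mul_dvd h1).2 (by rwa [pow_succ'] at hc))
        rw [if_neg h2, if_neg hd, zero_pow (by omega : p ≠ 0)]
    · have hd : ¬ p ^ (e + 1) ∣ n :=
        fun hc => h1 ((dvd_pow_self p (Nat.succ_ne_zero e)).trans hc)
      rw [if_neg h1, if_neg hd]

private lemma coeff_pow_q (f : PowerSeries (RatFunc F)) (n : ℕ) :
    PowerSeries.coeff (R := RatFunc F) n (f ^ q F) =
      if q F ∣ n then (PowerSeries.coeff (R := RatFunc F) (n / q F) f) ^ q F else 0 := by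
  obtain ⟨p, e, hp, hq, hchar⟩ := charK F
  haveI := Fact.mk hp
  haveI := hchar
  rw [hq]
  exact coeff_pow_ppow p f e n

private lemma coeff_eC_pow_small : ∀ d b : ℕ, d ≤ b % q F →
    PowerSeries.coeff (R := RatFunc F) b (eC F ^ d) = if b = d then 1 else 0 := by
  intro d
  induction d with
  | zero =>
    intro b _
    rw [pow_zero, PowerSeries.coeff_one]
  | succ d ih =>
    intro b hb
    have hq2 := two_le_q F
    have hbq : b % q F < q F := Nat.mod_lt _ (by omega)
    have hmod := Nat.div_add_mod b (q F)
    have hb1 : 1 ≤ b := by omega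
    rw [pow_succ, PowerSeries.coeff_mul]
    rw [Finset.sum_eq_single (b - 1, 1)]
    · have h1 : (b - 1) % q F = b % q F - 1 := by
        rw [show b - 1 = (b % q F - 1) + q F * (b / q F) by omega,
          Nat.add_mul_mod_self_left, Nat.mod_eq_of_lt (by omega)]
      rw [ih (b - 1) (by omega), coeff_eC_one, mul_one]
      exact if_congr (by omega) rfl rfl
    · intro x hx hne
      rw [Finset.HasAntidiagonal.mem_antidiagonal] at hx
      by_cases hy : ∃ j, q F ^ j = x.2
      · obtain ⟨j, hj⟩ := hy
        rcases Nat.eq_zero_or_pos j with rfl | hjpos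
        · exfalso
          apply hne
          have h2 : x.2 = 1 := by rw [← hj, pow_zero]
          exact Prod.ext_iff.2 ⟨show x.1 = b - 1 by omega, h2⟩
        · have hdvd : q F ∣ x.2 := by
            rw [← hj]; exact dvd_pow_self _ (by omega)
          obtain ⟨c, hc⟩ := hdvd
          have hx1 : x.1 % q F = b % q F := by
            rw [show b = x.1 + q F * c by omega, Nat.add_mul_mod_self_left]
          have hxd : ¬ x.1 = d := by
            intro hxd
            rw [hxd] at hx1
            have hdd : d % q F = d := Nat.mod_eq_of_lt (by omega)
            omega
          rw [ih x.1 (by omega), if_neg hxd, zero_mul]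
      · push_neg at hy
        rw [coeff_eC_of_ne F hy, mul_zero]
    · intro habs
      exact absurd (Finset.HasAntidiagonal.mem_antidiagonal.2 (by omega)) habs

private lemma coeff_eC_pow_of_lt {N n : ℕ} (h : n < N) :
    PowerSeries.coeff (R := RatFunc F) n (eC F ^ N) = 0 := by
  have hX : (PowerSeries.X : PowerSeries (RatFunc F)) ∣ eC F := by
    rw [PowerSeries.X_dvd_iff, ← PowerSeries.coeff_zero_eq_constantCoeff_apply]
    exact coeff_eC_zero F
  exact PowerSeries.X_pow_dvd_iff.1 (pow_dvd_pow_of_dvd hX N) n h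

private lemma key : ∀ m N : ℕ, N ≤ q F ^ m - 1 →
    PowerSeries.coeff (R := RatFunc F) (q F ^ m - 1) (eC F ^ N) =
      if N = q F ^ m - 1 then 1 else 0 := by
  intro m
  induction m with
  | zero =>
    intro N hN
    have hN0 : N = 0 := by simpa using hN
    subst hN0
    simp [PowerSeries.coeff_one]
  | succ m ih =>
    intro N hN
    have hq2 := two_le_q F
    have hqm : 1 ≤ q F ^ m := Nat.one_le_pow _ _ (by omega)
    have hqm1 : q F ≤ q F ^ (m + 1) := Nat.le_self_pow (Nat.succ_ne_zero m) _
    have hpow : q F ^ (m + 1) = q F * q F ^ m := pow_succ' _ _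
    have e1 : q F * (q F ^ m - 1) = q F ^ (m + 1) - q F := by
      rw [Nat.mul_sub, mul_one, ← pow_succ']
    have hNd := Nat.div_add_mod' N (q F)
    have hd : N % q F < q F := Nat.mod_lt _ (by omega)
    have hsplit : eC F ^ N = (eC F ^ (N / q F)) ^ q F * eC F ^ (N % q F) := by
      rw [← pow_mul, ← pow_add, hNd]
    have hn_mod : (q F ^ (m + 1) - 1) % q F = q F - 1 := by
      rw [show q F ^ (m + 1) - 1 = (q F - 1) + q F * (q F ^ m - 1) by omega,
        Nat.add_mul_mod_self_left, Nat.mod_eq_of_lt (by omega)]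
    have hn_div : (q F ^ (m + 1) - 1) / q F = q F ^ m - 1 := by
      rw [show q F ^ (m + 1) - 1 = (q F - 1) + q F * (q F ^ m - 1) by omega,
        Nat.add_mul_div_left _ _ (by omega : 0 < q F),
        Nat.div_eq_of_lt (by omega), zero_add]
    have hiff : N = q F ^ (m + 1) - 1 ↔ (N / q F = q F ^ m - 1 ∧ N % q F = q F - 1) := by
      constructor
      · rintro rfl
        exact ⟨hn_div, hn_mod⟩
      · rintro ⟨h1, h2⟩
        rw [← hNd, h1, h2, mul_comm]
        omega
    have hN' : N / q F ≤ q F ^ m - 1 := by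
      have : N / q F < q F ^ m := by
        rw [Nat.div_lt_iff_lt_mul (by omega : 0 < q F)]
        calc N ≤ q F ^ (m + 1) - 1 := hN
        _ < q F ^ m * q F := by rw [← pow_succ]; omega
      omega
    rw [hsplit, PowerSeries.coeff_mul]
    rw [Finset.sum_eq_single (q F * (q F ^ m - 1), q F - 1)]
    · rw [coeff_pow_q, if_pos (Dvd.intro _ rfl),
        Nat.mul_div_cancel_left _ (by omega : 0 < q F), ih _ hN',
        coeff_eC_pow_small F (N % q F) (q F - 1)
          (by rw [Nat.mod_eq_of_lt (show q F - 1 < q F by omega)]; omega),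
        apply_ite (fun x : RatFunc F => x ^ q F), one_pow,
        zero_pow (by omega : q F ≠ 0)]
      by_cases h1 : N / q F = q F ^ m - 1
      · by_cases h2 : N % q F = q F - 1
        · rw [if_pos h1, if_pos (by omega : q F - 1 = N % q F), one_mul,
            if_pos (hiff.2 ⟨h1, h2⟩)]
        · rw [if_neg (fun hc : q F - 1 = N % q F => h2 hc.symm), mul_zero,
            if_neg (fun hc => h2 (hiff.1 hc).2)]
      · rw [if_neg h1, zero_mul, if_neg (fun hc => h1 (hiff.1 hc).1)]
    · intro x hx hne
      rw [Finset.HasAntidiagonal.mem_antidiagonal] at hx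
      rw [coeff_pow_q]
      by_cases h1 : q F ∣ x.1
      · obtain ⟨c, hc⟩ := h1
        have hx2mod : x.2 % q F = q F - 1 := by
          have : x.2 % q F = (q F ^ (m + 1) - 1) % q F := by
            rw [show q F ^ (m + 1) - 1 = x.2 + q F * c by omega,
              Nat.add_mul_mod_self_left]
          rw [this, hn_mod]
        have hx2ne : ¬ x.2 = N % q F := by
          intro hx2
          apply hne
          have hlt : x.2 % q F = x.2 := Nat.mod_eq_of_lt (by omega)
          have hx2' : x.2 = q F - 1 := by omega
          have hx1' : x.1 = q F * (q F ^ m - 1) := by omega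
          exact Prod.ext_iff.2 ⟨hx1', hx2'⟩
        rw [coeff_eC_pow_small F (N % q F) x.2 (by omega), if_neg hx2ne, mul_zero]
      · rw [if_neg h1, zero_mul]
    · intro habs
      refine absurd (Finset.HasAntidiagonal.mem_antidiagonal.2 ?_) habs
      show q F * (q F ^ m - 1) + (q F - 1) = q F ^ (m + 1) - 1
      omega

private lemma coeff_eC_pow_qpow (m i : ℕ) :
    PowerSeries.coeff (R := RatFunc F) (q F ^ m - 1) (eC F ^ (q F ^ i - 1)) =
      if i = m then 1 else 0 := by
  have hq2 := two_le_q F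
  have h1 : 1 ≤ q F ^ i := Nat.one_le_pow _ _ (by omega)
  have h2 : 1 ≤ q F ^ m := Nat.one_le_pow _ _ (by omega)
  rcases le_or_gt i m with him | him
  · have hle : q F ^ i ≤ q F ^ m := Nat.pow_le_pow_right (by omega) him
    rw [key F m _ (by omega)]
    refine if_congr ?_ rfl rfl
    constructor
    · intro h
      exact Nat.pow_right_injective hq2 (show (q F) ^ i = (q F) ^ m by omega)
    · rintro rfl; rfl
  · have hlt : q F ^ m < q F ^ i := Nat.pow_lt_pow_right (by omega) him
    rw [coeff_eC_pow_of_lt F (by omega), if_neg (by omega)]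

private lemma mem_decTuples {r N : ℕ} {f : Fin r → ℕ} :
    f ∈ decTuples r N ↔ (∀ a b : Fin r, a < b → f b < f a) ∧ ∀ l, f l < N := by
  unfold decTuples
  simp only [Finset.mem_image, Finset.mem_filter, Finset.mem_univ, true_and]
  constructor
  · rintro ⟨g, hg, rfl⟩
    exact ⟨fun a b hab => hg a b hab, fun l => (g l).2⟩
  · rintro ⟨h1, h2⟩
    exact ⟨fun l => ⟨f l, h2 l⟩, fun a b hab => h1 a b hab, rfl⟩

private lemma decTuples_zero_eq (N : ℕ) :
    decTuples 0 N = {fun l : Fin 0 => l.elim0} := by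
  apply Finset.eq_singleton_iff_unique_mem.2
  constructor
  · exact mem_decTuples.2 ⟨fun a _ _ => a.elim0, fun l => l.elim0⟩
  · intro g _
    funext l
    exact l.elim0

private lemma master (r' : ℕ) (s : Fin (r' + 1) → ℕ) (u : Fin (r' + 1) → Polynomial F)
    (m : ℕ) :
    MPBC F s u ((q F) ^ m - 1) =
      toK F (cfact F ((q F) ^ m - 1)) *
        ((toK F (u 0)) ^ ((q F) ^ m) * ((toK F (Lpoly F m)) ^ (s 0))⁻¹) *
        ∑ i ∈ decTuples r' m, ∏ l : Fin r',
          (toK F (u l.succ)) ^ ((q F) ^ (i l)) *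
            ((toK F (Lpoly F (i l))) ^ (s l.succ))⁻¹ := by
  have hq2 := two_le_q F
  have hmn : m < q F ^ m := Nat.lt_pow_self (n := m) (by omega)
  rw [MPBC]
  conv_rhs => rw [mul_assoc]
  congr 1
  have step1 : ∀ i ∈ decTuples (r' + 1) ((q F) ^ m - 1 + 1),
      PowerSeries.coeff (R := RatFunc F) ((q F) ^ m - 1) (eC F ^ ((q F) ^ lead i - 1)) *
        ∏ l, (toK F (u l)) ^ ((q F) ^ (i l)) * ((toK F (Lpoly F (i l))) ^ (s l))⁻¹ =
      if i 0 = m then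
        (∏ l, (toK F (u l)) ^ ((q F) ^ (i l)) * ((toK F (Lpoly F (i l))) ^ (s l))⁻¹)
      else 0 := by
    intro i _
    have hlead : lead i = i 0 := by
      rw [lead, dif_pos (Nat.succ_pos r')]
      congr
    rw [coeff_eC_pow_qpow F m (lead i), hlead, ite_mul, one_mul, zero_mul]
  rw [Finset.sum_congr rfl step1, ← Finset.sum_filter, Finset.mul_sum]
  refine Finset.sum_bij' (fun i _ => fun l : Fin r' => i l.succ)
    (fun i' _ => Fin.cons m i') ?_ ?_ ?_ ?_ ?_
  · intro i hi
    rw [Finset.mem_filter] at hi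
    obtain ⟨hdec, hbd⟩ := mem_decTuples.1 hi.1
    refine mem_decTuples.2 ⟨fun a b hab => hdec a.succ b.succ (by rwa [Fin.succ_lt_succ_iff]), ?_⟩
    intro l
    have := hdec 0 l.succ (Fin.succ_pos l)
    have h2 := hi.2
    omega
  · intro i' hi'
    obtain ⟨hdec, hbd⟩ := mem_decTuples.1 hi'
    refine Finset.mem_filter.2 ⟨mem_decTuples.2 ⟨?_, ?_⟩, by simp⟩
    · intro a b hab
      induction b using Fin.cases with
      | zero => exact absurd hab (Fin.not_lt_zero a)
      | succ b' =>
        rw [Fin.cons_succ]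
        induction a using Fin.cases with
        | zero => rw [Fin.cons_zero]; exact hbd b'
        | succ a' =>
          rw [Fin.cons_succ]
          exact hdec a' b' (by rwa [Fin.succ_lt_succ_iff] at hab)
    · intro l
      induction l using Fin.cases with
      | zero => rw [Fin.cons_zero]; omega
      | succ l' =>
        rw [Fin.cons_succ]
        have := hbd l'
        omega
  · intro i hi
    rw [Finset.mem_filter] at hi
    funext l
    induction l using Fin.cases with
    | zero => rw [Fin.cons_zero]; exact hi.2.symm
    | succ l' => rw [Fin.cons_succ]
  · intro i' _
    funext l
    rw [Fin.cons_succ]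
  · intro i hi
    dsimp only
    rw [Finset.mem_filter] at hi
    rw [Fin.prod_univ_succ, hi.2]

end Aux

/-- For `r ≥ 1`, `s = (s_1, …, s_r) ∈ ℕ^r`, `j = (j_1, …, j_r) ∈ J_s`
and `m ≥ r − 1`,
`BC_{q^m−1}^{s,j} = Π(q^m − 1) · (u_{1 j_1}^{q^m}/L_m^{s_1}) ·
  Σ_{m > i_2 > ⋯ > i_r ≥ 0} ∏_{l=2}^r u_{l j_l}^{q^{i_l}}/L_{i_l}^{s_l}`;
equivalently
`BC_{q^m−1}^{s,j} = BC_{q^m−1}^{(s_1),(j_1)} · Σ_{m > i_2 > ⋯ > i_r ≥ 0} ∏_{l=2}^r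
  u_{l j_l}^{q^{i_l}}/L_{i_l}^{s_l}`. -/
theorem MPBC_qpow_eq (r : ℕ) (hr : 0 < r) (s j : Fin r → ℕ) (hs : ∀ l, 0 < s l)
    (H : ℕ → Polynomial (Polynomial F)) (hH : IsATFamily F H)
    (hj : ∀ l, j l ≤ (H (s l - 1)).natDegree)
    (u : Fin r → Polynomial F) (hu : ∀ l, u l = (H (s l - 1)).coeff (j l))
    (m : ℕ) (hm : r - 1 ≤ m) :
    MPBC F s u ((q F) ^ m - 1) =
      toK F (cfact F ((q F) ^ m - 1)) *
        ((toK F (u ⟨0, hr⟩)) ^ ((q F) ^ m) * ((toK F (Lpoly F m)) ^ (s ⟨0, hr⟩))⁻¹) *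
        ∑ i ∈ decTuples (r - 1) m,
          ∏ l : Fin (r - 1),
            (toK F (u ⟨l.1 + 1, by have := l.2; omega⟩)) ^ ((q F) ^ (i l)) *
              ((toK F (Lpoly F (i l))) ^ (s ⟨l.1 + 1, by have := l.2; omega⟩))⁻¹ ∧
    MPBC F s u ((q F) ^ m - 1) =
      MPBC F (fun _ : Fin 1 => s ⟨0, hr⟩) (fun _ => u ⟨0, hr⟩) ((q F) ^ m - 1) *
        ∑ i ∈ decTuples (r - 1) m,
          ∏ l : Fin (r - 1),
            (toK F (u ⟨l.1 + 1, by have := l.2; omega⟩)) ^ ((q F) ^ (i l)) *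
              ((toK F (Lpoly F (i l))) ^ (s ⟨l.1 + 1, by have := l.2; omega⟩))⁻¹ := by
  obtain ⟨r', rfl⟩ : ∃ r', r = r' + 1 := ⟨r - 1, (Nat.succ_pred_eq_of_pos hr).symm⟩
  have hzero : (⟨0, hr⟩ : Fin (r' + 1)) = 0 := Fin.ext (by simp)
  have hmas := master F r' s u m
  rw [hzero]
  have hone : MPBC F (fun _ : Fin 1 => s 0) (fun _ => u 0) ((q F) ^ m - 1) =
      toK F (cfact F ((q F) ^ m - 1)) *
        ((toK F (u 0)) ^ ((q F) ^ m) * ((toK F (Lpoly F m)) ^ (s 0))⁻¹) := by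
    have h := master F 0 (fun _ : Fin 1 => s 0) (fun _ => u 0) m
    rw [decTuples_zero_eq, Finset.sum_singleton] at h
    rw [Fin.prod_univ_zero, mul_one] at h
    exact h
  refine ⟨hmas, ?_⟩
  rw [hone]
  exact hmas

end Carlitz
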